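/- Let η⋆_{xw}, η⋆_{xw'}, δ⋆_{x'w} : U → [0,1] be measurable with |η⋆_{xw}(u) − η⋆_{xw'}(u)| ≤ ε_w pointwise and δ⋆_{x'w}(u) ≤ U_X pointwise. Define ω_{xw} = E[η⋆_{xw}], ω_{xw'} = E[η⋆_{xw'}], κ1 = E[η⋆_{xw}(1−δ⋆_{x'w})], χ' = E[δ⋆_{x'w}]. Then ω_{xw} − ω_{xw'}·U_X ≤ κ1 + ε_w·χ'. -/
import Mathlib

open MeasureTheory

/-- First coupled inequality in display (14) of Theorem 2 of Silva–Evans: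
with `ω_{xw} = E[η⋆_{xw}]`, `ω_{xw'} = E[η⋆_{xw'}]`, `κ₁ = E[η⋆_{xw}(1-δ⋆_{x'w})]`,
`χ' = E[δ⋆_{x'w}]`: `ω_{xw} - ω_{xw'}·U_X ≤ κ₁ + ε_w·χ'`. -/
theorem stmt7 {U : Type*} [MeasurableSpace U] (P : Measure U) [IsProbabilityMeasure P]
    (ηxw ηxw' δx'w : U → ℝ)
    (hη1 : Measurable ηxw) (hη2 : Measurable ηxw') (hδ : Measurable δx'w)
    (hηxw : ∀ u, ηxw u ∈ Set.Icc (0:ℝ) 1) (hηxw' : ∀ u, ηxw' u ∈ Set.Icc (0:ℝ) 1)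
    (hδx'w : ∀ u, δx'w u ∈ Set.Icc (0:ℝ) 1)
    (εw UX : ℝ)
    (hcross : ∀ u, |ηxw u - ηxw' u| ≤ εw)
    (hδU : ∀ u, δx'w u ≤ UX) :
    (∫ u, ηxw u ∂P) - (∫ u, ηxw' u ∂P) * UX ≤
      (∫ u, ηxw u * (1 - δx'w u) ∂P) + εw * ∫ u, δx'w u ∂P := by
  have bi : ∀ (f : U → ℝ) (C : ℝ), Measurable f → (∀ u, |f u| ≤ C) → Integrable f P := by
    intro f C hf hb
    exact (integrable_const C).mono' hf.aestronglyMeasurable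
      (Filter.Eventually.of_forall fun u => by simpa using hb u)
  have i1 : Integrable ηxw P := bi _ 1 hη1 fun u => abs_le.2 ⟨by linarith [(hηxw u).1], (hηxw u).2⟩
  have i2 : Integrable ηxw' P := bi _ 1 hη2 fun u => abs_le.2 ⟨by linarith [(hηxw' u).1], (hηxw' u).2⟩
  have i3 : Integrable δx'w P := bi _ 1 hδ fun u => abs_le.2 ⟨by linarith [(hδx'w u).1], (hδx'w u).2⟩
  have i4 : Integrable (fun u => ηxw u * (1 - δx'w u)) P := by
    refine bi _ 1 (hη1.mul (measurable_const.sub hδ)) fun u => ?_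
    have h1 := hηxw u; have h2 := hδx'w u
    rw [abs_mul]
    calc |ηxw u| * |1 - δx'w u| ≤ 1 * 1 := by
          apply mul_le_mul
          · exact abs_le.2 ⟨by linarith [h1.1], h1.2⟩
          · exact abs_le.2 ⟨by linarith [h2.2], by linarith [h2.1]⟩
          · exact abs_nonneg _
          · norm_num
      _ = 1 := one_mul 1
  have key : ∀ u, ηxw u - ηxw' u * UX ≤ ηxw u * (1 - δx'w u) + εw * δx'w u := by
    intro u
    have h1 := hηxw u; have h2 := hηxw' u; have h3 := hδx'w u
    have hc := abs_le.1 (hcross u)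
    have : ηxw u * δx'w u ≤ ηxw' u * UX + εw * δx'w u := by
      calc ηxw u * δx'w u ≤ (ηxw' u + εw) * δx'w u := by
            apply mul_le_mul_of_nonneg_right (by linarith [hc.2]) h3.1
        _ = ηxw' u * δx'w u + εw * δx'w u := by ring
        _ ≤ ηxw' u * UX + εw * δx'w u := by
            have := mul_le_mul_of_nonneg_left (hδU u) h2.1
            linarith
    nlinarith
  calc (∫ u, ηxw u ∂P) - (∫ u, ηxw' u ∂P) * UX
      = ∫ u, ηxw u - ηxw' u * UX ∂P := by
        rw [integral_sub i1 (i2.mul_const UX), integral_mul_const]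
    _ ≤ ∫ u, ηxw u * (1 - δx'w u) + εw * δx'w u ∂P := by
        exact integral_mono (i1.sub (i2.mul_const UX)) (i4.add (i3.const_mul εw)) key
    _ = (∫ u, ηxw u * (1 - δx'w u) ∂P) + εw * ∫ u, δx'w u ∂P := by
        rw [integral_add i4 (i3.const_mul εw), integral_const_mul]
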